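/- If μ is a finite positive Borel measure on a finite-dimensional real vector space V whose support spans V, then every element of the stabilizer group GL(V)^μ = {g ∈ GL(V) : g_*μ = μ} is elliptic, i.e., generates a relatively compact subgroup of GL(V). -/

import Mathlib

open MeasureTheory

/-- The support of a Borel measure: points all of whose open neighborhoods
have positive measure. -/
def msupport {W : Type*} [TopologicalSpace W] [MeasurableSpace W]
    (μ : Measure W) : Set W :=
  {x | ∀ U : Set W, IsOpen U → x ∈ U → μ U ≠ 0}

/-- Tightness of finite measures on a finite-dimensional normed space. -/
lemma msupport_tight {V : Type*} [NormedAddCommGroup V]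
    [MeasurableSpace V] [BorelSpace V]
    (μ : Measure V) [IsFiniteMeasure μ] {c : ENNReal} (hc : c ≠ 0) :
    ∃ R : ℝ, 0 < R ∧ μ (Metric.closedBall (0 : V) R)ᶜ < c := by
  have hA : Filter.Tendsto (fun n : ℕ => μ (Metric.closedBall (0 : V) n)ᶜ)
      Filter.atTop (nhds (μ (⋂ n : ℕ, (Metric.closedBall (0 : V) n)ᶜ))) := by
    apply tendsto_measure_iInter_atTop
    · intro n
      exact (Metric.isClosed_closedBall.measurableSet.compl).nullMeasurableSet
    · intro m n hmn
      exact Set.compl_subset_compl.2 (Metric.closedBall_subset_closedBall (by exact_mod_cast hmn))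
    · exact ⟨0, measure_ne_top μ _⟩
  have hempty : (⋂ n : ℕ, (Metric.closedBall (0 : V) n)ᶜ) = ∅ := by
    ext x
    simp only [Set.mem_iInter, Set.mem_compl_iff, Metric.mem_closedBall, Set.mem_empty_iff_false,
      iff_false, not_forall, not_not]
    obtain ⟨n, hn⟩ := exists_nat_ge (dist x 0)
    exact ⟨n, hn⟩
  rw [hempty, measure_empty] at hA
  have := hA.eventually_lt_const (by exact pos_iff_ne_zero.2 hc)
  obtain ⟨n, hn⟩ := this.exists
  exact ⟨n + 1, by positivity, lt_of_le_of_lt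
    (measure_mono (Set.compl_subset_compl.2
      (Metric.closedBall_subset_closedBall (by linarith [Nat.cast_nonneg (α := ℝ) n])))) hn⟩

theorem stabilizer_of_spanning_finite_measure_elliptic {V : Type*}
    [NormedAddCommGroup V] [NormedSpace ℝ V] [FiniteDimensional ℝ V]
    [MeasurableSpace V] [BorelSpace V]
    (μ : Measure V) [IsFiniteMeasure μ]
    (hspan : Submodule.span ℝ (msupport μ) = ⊤)
    (g : (V →L[ℝ] V)ˣ) (hinv : μ.map (g : V →L[ℝ] V) = μ) :
    IsCompact (closure (Set.range fun n : ℤ => g ^ n)) := by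
  rcases subsingleton_or_nontrivial V with hV | hV
  · haveI : Subsingleton (V →L[ℝ] V) :=
      ⟨fun a b => ContinuousLinearMap.ext fun x => Subsingleton.elim _ _⟩
    haveI : Subsingleton (V →L[ℝ] V)ˣ := ⟨fun a b => Units.ext (Subsingleton.elim _ _)⟩
    exact (Set.subsingleton_of_subsingleton (s := closure _)).isCompact
  -- measurability of the maps
  have hmeas : ∀ u : (V →L[ℝ] V)ˣ, Measurable ((u : V →L[ℝ] V) : V → V) :=
    fun u => (u : V →L[ℝ] V).continuous.measurable
  -- all integer powers preserve μ
  have hcomp : ∀ u w : (V →L[ℝ] V)ˣ, μ.map ((u : V →L[ℝ] V) : V → V) = μ →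
      μ.map ((w : V →L[ℝ] V) : V → V) = μ →
      μ.map (((w * u : (V →L[ℝ] V)ˣ) : V →L[ℝ] V) : V → V) = μ := by
    intro u w hu hw
    have : (((w * u : (V →L[ℝ] V)ˣ) : V →L[ℝ] V) : V → V)
        = ((w : V →L[ℝ] V) : V → V) ∘ ((u : V →L[ℝ] V) : V → V) := by
      funext v; simp
    rw [this, ← Measure.map_map (hmeas w) (hmeas u), hu, hw]
  have hginv : μ.map ((g⁻¹ : (V →L[ℝ] V)ˣ) : V →L[ℝ] V) = μ := by
    conv_lhs => rw [← hinv]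
    rw [Measure.map_map (hmeas g⁻¹) (hmeas g)]
    have : ((g⁻¹ : (V →L[ℝ] V)ˣ) : V →L[ℝ] V) ∘ ((g : V →L[ℝ] V) : V → V) = id := by
      funext v
      simp [← ContinuousLinearMap.mul_apply, ← Units.val_mul]
    rw [this, Measure.map_id]
  have hpow : ∀ n : ℤ, μ.map (((g ^ n : (V →L[ℝ] V)ˣ) : V →L[ℝ] V) : V → V) = μ := by
    intro n
    induction n using Int.induction_on with
    | zero =>
        rw [zpow_zero]
        have h1 : (((1 : (V →L[ℝ] V)ˣ) : V →L[ℝ] V) : V → V) = id := by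
          funext v; simp
        rw [h1, Measure.map_id]
    | succ k ih =>
        rw [zpow_add_one]
        exact hcomp g (g ^ (k : ℤ)) hinv ih
    | pred k ih =>
        rw [zpow_sub_one]
        exact hcomp g⁻¹ (g ^ (-k : ℤ)) hginv ih
  -- a basis inside the support
  obtain ⟨s, hs_sub, hs_span, hs_li⟩ := exists_linearIndependent ℝ (msupport μ)
  rw [hspan] at hs_span
  haveI : Fintype s := (hs_li.setFinite).fintype
  have hs_ne : s.Nonempty := by
    rcases Set.eq_empty_or_nonempty s with h | h
    · exfalso
      rw [h] at hs_span
      simp only [Submodule.span_empty] at hs_span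
      exact bot_ne_top hs_span
    · exact h
  haveI : Nonempty s := hs_ne.to_subtype
  let b : Module.Basis s ℝ V := Module.Basis.mk hs_li (by rw [Subtype.range_coe, hs_span])
  have hb_apply : ∀ i : s, b i = (i : V) := fun i => Module.Basis.mk_apply _ _ _
  -- the reconstruction operator
  let F₀ : (s → V) →ₗ[ℝ] (V →L[ℝ] V) :=
    (LinearMap.toContinuousLinearMap : (V →ₗ[ℝ] V) ≃ₗ[ℝ] (V →L[ℝ] V)).toLinearMap ∘ₗ
      (b.constr ℝ : (s → V) ≃ₗ[ℝ] (V →ₗ[ℝ] V)).toLinearMap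
  let F : (s → V) →L[ℝ] (V →L[ℝ] V) := LinearMap.toContinuousLinearMap F₀
  have hF : ∀ T : V →L[ℝ] V, F (fun i => T (i : V)) = T := by
    intro T
    apply ContinuousLinearMap.coe_injective
    show (LinearMap.toContinuousLinearMap (b.constr ℝ fun i => T (i : V)) :
      V →ₗ[ℝ] V) = (T : V →ₗ[ℝ] V)
    rw [LinearMap.coe_toContinuousLinearMap]
    apply b.ext
    intro i
    rw [Module.Basis.constr_basis, hb_apply]
    rfl
  set C : ℝ := ‖F‖ + 1 with hC
  have hC_pos : 0 < C := by positivity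
  have hFC : ∀ T : V →L[ℝ] V, ‖T‖ ≤ C * ‖fun i : s => T (i : V)‖ := by
    intro T
    calc ‖T‖ = ‖F (fun i : s => T (i : V))‖ := by rw [hF]
      _ ≤ ‖F‖ * ‖fun i : s => T (i : V)‖ := F.le_opNorm _
      _ ≤ C * ‖fun i : s => T (i : V)‖ := by
          apply mul_le_mul_of_nonneg_right (by simp [hC]) (norm_nonneg _)
  set ε : ℝ := 1 / (2 * C) with hε
  have hε_pos : 0 < ε := by positivity
  -- positive measure of balls around basis points
  have hball : ∀ i : s, μ (Metric.ball (i : V) ε) ≠ 0 := fun i =>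
    hs_sub i.2 _ Metric.isOpen_ball (Metric.mem_ball_self hε_pos)
  set c : ENNReal := Finset.univ.inf' Finset.univ_nonempty (fun i : s => μ (Metric.ball (i : V) ε))
    with hc_def
  have hc_ne : c ≠ 0 := by
    obtain ⟨i, _, hi⟩ := Finset.exists_mem_eq_inf' Finset.univ_nonempty
      (fun i : s => μ (Metric.ball (i : V) ε))
    rw [hc_def, hi]
    exact hball i
  have hc_le : ∀ i : s, c ≤ μ (Metric.ball (i : V) ε) := fun i =>
    Finset.inf'_le _ (Finset.mem_univ i)
  obtain ⟨R, hR_pos, hR⟩ := msupport_tight μ hc_ne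
  -- the key uniform bound
  have hbound : ∀ n : ℤ, ‖((g ^ n : (V →L[ℝ] V)ˣ) : V →L[ℝ] V)‖ ≤ 2 * C * R := by
    intro n
    set A : V →L[ℝ] V := ((g ^ n : (V →L[ℝ] V)ˣ) : V →L[ℝ] V) with hA_def
    have hAi : ∀ i : s, ‖A (i : V)‖ ≤ R + ‖A‖ * ε := by
      intro i
      -- find a point of the ball mapped into the big closed ball
      have hne : (Metric.ball (i : V) ε ∩ (A : V → V) ⁻¹' (Metric.closedBall 0 R)).Nonempty := by
        by_contra hemp
        rw [Set.not_nonempty_iff_eq_empty] at hemp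
        have hsubset : Metric.ball (i : V) ε ⊆ (A : V → V) ⁻¹' (Metric.closedBall 0 R)ᶜ := by
          intro y hy
          by_contra hy'
          simp only [Set.mem_preimage, Set.mem_compl_iff, not_not] at hy'
          exact Set.eq_empty_iff_forall_notMem.1 hemp y ⟨hy, hy'⟩
        have h1 : μ (Metric.ball (i : V) ε) ≤ μ ((A : V → V) ⁻¹' (Metric.closedBall 0 R)ᶜ) :=
          measure_mono hsubset
        have h2 : μ ((A : V → V) ⁻¹' (Metric.closedBall 0 R)ᶜ) = μ (Metric.closedBall 0 R)ᶜ := by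
          rw [← Measure.map_apply (hmeas (g ^ n)) Metric.isClosed_closedBall.measurableSet.compl,
            hpow n]
        rw [h2] at h1
        exact absurd (lt_of_le_of_lt (le_trans (hc_le i) h1) hR) (lt_irrefl c)
      obtain ⟨y, hy_ball, hy_pre⟩ := hne
      have h1 : ‖A y‖ ≤ R := by
        simpa [Metric.mem_closedBall, dist_zero_right] using hy_pre
      have h2 : ‖(i : V) - y‖ ≤ ε := by
        rw [← dist_eq_norm, dist_comm]
        exact le_of_lt (Metric.mem_ball.1 hy_ball)
      calc ‖A (i : V)‖ = ‖A y + A ((i : V) - y)‖ := by rw [map_sub, add_sub_cancel]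
        _ ≤ ‖A y‖ + ‖A ((i : V) - y)‖ := norm_add_le _ _
        _ ≤ R + ‖A‖ * ‖(i : V) - y‖ := add_le_add h1 (A.le_opNorm _)
        _ ≤ R + ‖A‖ * ε := by
            exact add_le_add (le_refl _) (mul_le_mul_of_nonneg_left h2 (norm_nonneg _))
    have hAnorm : ‖A‖ ≤ C * (R + ‖A‖ * ε) := by
      refine le_trans (hFC A) (mul_le_mul_of_nonneg_left ?_ hC_pos.le)
      refine pi_norm_le_iff_of_nonneg ?_ |>.2 hAi
      have : 0 ≤ ‖A‖ * ε := mul_nonneg (norm_nonneg _) hε_pos.le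
      linarith
    have hCε : C * ε = 1 / 2 := by
      rw [hε]; field_simp
    have hexp : C * (R + ‖A‖ * ε) = C * R + ‖A‖ * (C * ε) := by ring
    rw [hCε] at hexp
    rw [hexp] at hAnorm
    clear_value A C ε
    linarith
  set B : ℝ := 2 * C * R with hB
  have hB_pos : 0 < B := by positivity
  -- compactness via the embedding into the product
  set M := V →L[ℝ] V
  have hemb : Topology.IsEmbedding (Units.embedProduct M) := Units.isEmbedding_embedProduct
  rw [hemb.isCompact_iff]
  -- the image of the range is contained in a compact product
  set K : Set (M × Mᵐᵒᵖ) :=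
    (Metric.closedBall (0 : M) B) ×ˢ (MulOpposite.op '' Metric.closedBall (0 : M) B) with hK
  have hK_compact : IsCompact K := by
    apply IsCompact.prod (isCompact_closedBall _ _)
    exact (isCompact_closedBall _ _).image MulOpposite.continuous_op
  have himg_sub : (Units.embedProduct M) '' (Set.range fun n : ℤ => g ^ n) ⊆ K := by
    rintro p ⟨u, ⟨n, rfl⟩, rfl⟩
    constructor
    · simp only [Units.embedProduct_apply]
      rw [Metric.mem_closedBall, dist_zero_right]
      exact hbound n
    · simp only [Units.embedProduct_apply]
      refine ⟨((g ^ n)⁻¹ : (V →L[ℝ] V)ˣ), ?_, rfl⟩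
      rw [Metric.mem_closedBall, dist_zero_right, ← zpow_neg]
      exact hbound (-n)
  -- range of embedProduct is closed
  have hcl : IsClosed (Set.range (Units.embedProduct M)) := by
    have hrange : Set.range (Units.embedProduct M)
        = {p : M × Mᵐᵒᵖ | p.1 * p.2.unop = 1 ∧ p.2.unop * p.1 = 1} := by
      ext p
      constructor
      · rintro ⟨u, rfl⟩
        exact ⟨u.mul_inv, u.inv_mul⟩
      · rintro ⟨h1, h2⟩
        exact ⟨⟨p.1, p.2.unop, h1, h2⟩, by simp [Units.embedProduct]⟩
    rw [hrange]
    have hcont : Continuous fun p : M × Mᵐᵒᵖ => p.2.unop :=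
      MulOpposite.continuous_unop.comp continuous_snd
    exact IsClosed.inter
      (isClosed_eq (continuous_fst.mul hcont) continuous_const)
      (isClosed_eq (hcont.mul continuous_fst) continuous_const)
  -- image of the closure
  have himage : (Units.embedProduct M) '' closure (Set.range fun n : ℤ => g ^ n)
      = closure ((Units.embedProduct M) '' (Set.range fun n : ℤ => g ^ n))
        ∩ Set.range (Units.embedProduct M) := by
    rw [hemb.closure_eq_preimage_closure_image, Set.image_preimage_eq_inter_range]
  rw [himage]
  apply IsCompact.of_isClosed_subset hK_compact (isClosed_closure.inter hcl)
  exact Set.Subset.trans Set.inter_subset_left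
    (closure_minimal himg_sub (hK_compact.isClosed))
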